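/- Let V₀, V₁, V₂ be Euclidean spaces over ℝ, let f₀ : V₀ → V₁ and f₁ : V₁ → V₂ be differentiable, let P : V₁ →L[ℝ] V₁ and Q : V₂ →L[ℝ] V₂ be self-adjoint continuous linear (precision) operators, and fix a ∈ V₀ and b ∈ V₂. Define the predictive-coding free energy contribution φ : V₁ → ℝ by φ x = (1/2)⟪x − f₀ a, P (x − f₀ a)⟫ + (1/2)⟪b − f₁ x, Q (b − f₁ x)⟫. Then for every x ∈ V₁, gradient φ x = P (x − f₀ a) − (fderiv ℝ f₁ x)† (Q (b − f₁ x)); i.e., the gradient of the free energy with respect to a latent state is the precision-weighted prediction error at that state minus the transposed Jacobian applied to the precision-weighted prediction error of its child. -/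

import Mathlib

open scoped RealInnerProductSpace

theorem gradient_free_energy_latent_aux (n₁ n₂ : ℕ)
    (f₁ : EuclideanSpace ℝ (Fin n₁) → EuclideanSpace ℝ (Fin n₂))
    (hf₁ : Differentiable ℝ f₁)
    (P : EuclideanSpace ℝ (Fin n₁) →L[ℝ] EuclideanSpace ℝ (Fin n₁))
    (Q : EuclideanSpace ℝ (Fin n₂) →L[ℝ] EuclideanSpace ℝ (Fin n₂))
    (hP : ∀ u v, ⟪P u, v⟫ = ⟪u, P v⟫)
    (hQ : ∀ u v, ⟪Q u, v⟫ = ⟪u, Q v⟫)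
    (c : EuclideanSpace ℝ (Fin n₁)) (b : EuclideanSpace ℝ (Fin n₂)) (x : EuclideanSpace ℝ (Fin n₁)) :
    gradient (fun x => (1 / 2) * ⟪x - c, P (x - c)⟫ + (1 / 2) * ⟪b - f₁ x, Q (b - f₁ x)⟫) x
      = P (x - c) - ContinuousLinearMap.adjoint (fderiv ℝ f₁ x) (Q (b - f₁ x)) := by
  set A := fderiv ℝ f₁ x with hA
  have hAd : HasFDerivAt f₁ A x := (hf₁ x).hasFDerivAt
  have h1 : HasFDerivAt (fun y : EuclideanSpace ℝ (Fin n₁) => y - c)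
      (ContinuousLinearMap.id ℝ _) x := (hasFDerivAt_id x).sub_const c
  have hP1 : HasFDerivAt (fun y => P (y - c))
      (P.comp (ContinuousLinearMap.id ℝ _)) x := P.hasFDerivAt.comp x h1
  rw [ContinuousLinearMap.comp_id] at hP1
  have hin1 := (h1.inner ℝ hP1).const_mul (1/2 : ℝ)
  have h2 : HasFDerivAt (fun y => b - f₁ y) (-A) x := by
    have := (hasFDerivAt_const b x).sub hAd
    rwa [zero_sub] at this
  have hQ2 : HasFDerivAt (fun y => Q (b - f₁ y)) (Q.comp (-A)) x := Q.hasFDerivAt.comp x h2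
  have hin2 := (h2.inner ℝ hQ2).const_mul (1/2 : ℝ)
  have hsum := hin1.add hin2
  have hgrad : HasGradientAt
      (fun y => (1 / 2) * ⟪y - c, P (y - c)⟫ + (1 / 2) * ⟪b - f₁ y, Q (b - f₁ y)⟫)
      (P (x - c) - ContinuousLinearMap.adjoint A (Q (b - f₁ x))) x := by
    rw [hasGradientAt_iff_hasFDerivAt]
    refine hsum.congr_fderiv ?_
    symm
    refine ContinuousLinearMap.ext fun h => ?_
    simp only [InnerProductSpace.toDual_apply_apply, ContinuousLinearMap.add_apply,
      ContinuousLinearMap.smul_apply, ContinuousLinearMap.coe_comp', Function.comp_apply,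
      ContinuousLinearMap.prod_apply, fderivInnerCLM_apply, ContinuousLinearMap.neg_apply,
      ContinuousLinearMap.id_apply, smul_eq_mul, inner_sub_left, inner_neg_left,
      inner_neg_right, map_neg, ContinuousLinearMap.adjoint_inner_left]
    rw [← inner_sub_left x c (P h), ← inner_sub_left b (f₁ x) (Q (A h)),
        ← hP (x - c) h, ← hQ (b - f₁ x) (A h),
        real_inner_comm h (P (x - c)), real_inner_comm (A h) (Q (b - f₁ x))]
    ring
  exact hgrad.gradient

/-- the gradient of the predictive-coding free-energy contribution
`φ x = ½⟪x − f₀ a, P (x − f₀ a)⟫ + ½⟪b − f₁ x, Q (b − f₁ x)⟫` at a latent state `x` is the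
precision-weighted prediction error at `x` minus the transposed Jacobian applied to the
precision-weighted prediction error of its child. -/
theorem gradient_free_energy_latent
    (n₀ n₁ n₂ : ℕ)
    (f₀ : EuclideanSpace ℝ (Fin n₀) → EuclideanSpace ℝ (Fin n₁))
    (f₁ : EuclideanSpace ℝ (Fin n₁) → EuclideanSpace ℝ (Fin n₂))
    (hf₀ : Differentiable ℝ f₀) (hf₁ : Differentiable ℝ f₁)
    (P : EuclideanSpace ℝ (Fin n₁) →L[ℝ] EuclideanSpace ℝ (Fin n₁))
    (Q : EuclideanSpace ℝ (Fin n₂) →L[ℝ] EuclideanSpace ℝ (Fin n₂))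
    (hP : ∀ u v, ⟪P u, v⟫ = ⟪u, P v⟫)
    (hQ : ∀ u v, ⟪Q u, v⟫ = ⟪u, Q v⟫)
    (a : EuclideanSpace ℝ (Fin n₀)) (b : EuclideanSpace ℝ (Fin n₂))
    (φ : EuclideanSpace ℝ (Fin n₁) → ℝ)
    (hφ : φ = fun x =>
      (1 / 2) * ⟪x - f₀ a, P (x - f₀ a)⟫ + (1 / 2) * ⟪b - f₁ x, Q (b - f₁ x)⟫) :
    ∀ x, gradient φ x
      = P (x - f₀ a) - ContinuousLinearMap.adjoint (fderiv ℝ f₁ x) (Q (b - f₁ x)) := by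
  subst hφ
  intro x
  exact gradient_free_energy_latent_aux n₁ n₂ f₁ hf₁ P Q hP hQ (f₀ a) b x
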